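/- Let A be a singular irreducible M-matrix with Au = 0, u > 0, and suppose the shifted CR limit Ŝ = lim Ẑ_ℓ exists and satisfies Ŝ = S + uzᵀ for some vector z, where S = 4A^{1/2}. If Ŝ is invertible, then S = 16AŜ^{-1}, hence A^{1/2} = 4AŜ^{-1}. -/

import Mathlib

open Matrix

noncomputable def toC {n : ℕ} (A : Matrix (Fin n) (Fin n) ℝ) : Matrix (Fin n) (Fin n) ℂ :=
  A.map (fun x => (x : ℂ))

def IsEig {n : ℕ} (A : Matrix (Fin n) (Fin n) ℂ) (μ : ℂ) : Prop :=
  ∃ v : Fin n → ℂ, v ≠ 0 ∧ A *ᵥ v = μ • v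

noncomputable def specRad {n : ℕ} (B : Matrix (Fin n) (Fin n) ℝ) : ℝ :=
  sSup {r : ℝ | ∃ μ : ℂ, IsEig (toC B) μ ∧ r = ‖μ‖}

def IsMmat {n : ℕ} (A : Matrix (Fin n) (Fin n) ℝ) : Prop :=
  ∃ (α : ℝ) (B : Matrix (Fin n) (Fin n) ℝ),
    (∀ i j, 0 ≤ B i j) ∧ specRad B ≤ α ∧ A = α • (1 : Matrix (Fin n) (Fin n) ℝ) - B

/-- If Ŝ = S + u zᵀ with S = 4 A^{1/2} (so S u = 0, S² = 16A) and Ŝ invertible, then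
S = 16 A Ŝ⁻¹ and hence A^{1/2} = 4 A Ŝ⁻¹. -/
theorem stmt19 {n : ℕ} (A X S Shat : Matrix (Fin n) (Fin n) ℝ) (hA : IsMmat A)
    (hsing : ¬ IsUnit A)
    (u z : Fin n → ℝ) (hu : ∀ i, 0 < u i) (hAu : A *ᵥ u = 0)
    (hXsq : X * X = A) (hXu : X *ᵥ u = 0) (hS : S = (4 : ℝ) • X)
    (hShat : Shat = S + vecMulVec u z) (hinv : IsUnit Shat) :
    S = (16 : ℝ) • (A * Shat⁻¹) ∧ X = (4 : ℝ) • (A * Shat⁻¹) := by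
  have hSu : S *ᵥ u = 0 := by rw [hS, smul_mulVec, hXu, smul_zero]
  have hSvv : S * vecMulVec u z = 0 := by
    ext i j
    simp only [Matrix.mul_apply, vecMulVec_apply, Matrix.zero_apply]
    have h0 : ∑ k, S i k * u k = 0 := congrFun hSu i
    calc ∑ k, S i k * (u k * z j) = (∑ k, S i k * u k) * z j := by
          rw [Finset.sum_mul]; exact Finset.sum_congr rfl fun k _ => by ring
      _ = 0 := by rw [h0, zero_mul]
  have hSS : S * Shat = (16 : ℝ) • A := by
    rw [hShat, Matrix.mul_add, hSvv, add_zero, hS, Matrix.smul_mul, Matrix.mul_smul,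
      hXsq]
    norm_num [smul_smul]
  have hdet : IsUnit Shat.det := (Matrix.isUnit_iff_isUnit_det Shat).mp hinv
  have hinv1 : Shat * Shat⁻¹ = 1 := Matrix.mul_nonsing_inv Shat hdet
  have hmain : S = (16 : ℝ) • (A * Shat⁻¹) := by
    calc S = S * (Shat * Shat⁻¹) := by rw [hinv1, Matrix.mul_one]
      _ = (S * Shat) * Shat⁻¹ := by rw [Matrix.mul_assoc]
      _ = (16 : ℝ) • (A * Shat⁻¹) := by rw [hSS, Matrix.smul_mul]
  refine ⟨hmain, ?_⟩
  have h4 : (4 : ℝ) • X = (4 : ℝ) • ((4 : ℝ) • (A * Shat⁻¹)) := by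
    rw [← hS, hmain]; norm_num [smul_smul]
  have := smul_right_injective (Matrix (Fin n) (Fin n) ℝ) (by norm_num : (4:ℝ) ≠ 0) h4
  exact this
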